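/- Let C be a category with objects r, s, x, x' and morphisms g : x ⟶ r, f : x ⟶ s, g' : x' ⟶ r, f' : x' ⟶ s, such that (g, f) is jointly monic (for all a, b : z ⟶ x, a ≫ g = b ≫ g and a ≫ f = b ≫ f imply a = b) and (g', f') is jointly monic. Suppose π : P ⟶ x, π' : P ⟶ x' form a pullback of f and f' (IsPullback π π' f f'), and ρ : Q ⟶ x, ρ' : Q ⟶ x' form a pullback of g and g' (IsPullback ρ ρ' g g'). Suppose given i : r ⟶ P with i ≫ π ≫ g = 𝟙 r and i ≫ π' ≫ g' = 𝟙 r, and suppose ρ ≫ f = ρ' ≫ f'. Then g and g' are isomorphisms, with inverses i ≫ π and i ≫ π' respectively, and f' = g' ≫ (i ≫ π) ≫ f. -/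

import Mathlib

open CategoryTheory

theorem jointly_monic_adjunction_graph {C : Type*} [Category C]
    {r s x x' P Q : C}
    (g : x ⟶ r) (f : x ⟶ s) (g' : x' ⟶ r) (f' : x' ⟶ s)
    (hjm : ∀ {z : C} (a b : z ⟶ x), a ≫ g = b ≫ g → a ≫ f = b ≫ f → a = b)
    (hjm' : ∀ {z : C} (a b : z ⟶ x'), a ≫ g' = b ≫ g' → a ≫ f' = b ≫ f' → a = b)
    (π : P ⟶ x) (π' : P ⟶ x') (hP : IsPullback π π' f f')
    (ρ : Q ⟶ x) (ρ' : Q ⟶ x') (hQ : IsPullback ρ ρ' g g')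
    (i : r ⟶ P) (hi : i ≫ π ≫ g = 𝟙 r) (hi' : i ≫ π' ≫ g' = 𝟙 r)
    (hcounit : ρ ≫ f = ρ' ≫ f') :
    (g ≫ (i ≫ π) = 𝟙 x ∧ (i ≫ π) ≫ g = 𝟙 r) ∧
      (g' ≫ (i ≫ π') = 𝟙 x' ∧ (i ≫ π') ≫ g' = 𝟙 r) ∧
      f' = g' ≫ (i ≫ π) ≫ f := by
  set e := i ≫ π with he
  set e' := i ≫ π' with he'
  have heg : e ≫ g = 𝟙 r := by simpa [he] using hi
  have heg' : e' ≫ g' = 𝟙 r := by simpa [he'] using hi'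
  have hef : e ≫ f = e' ≫ f' := by
    simp only [he, he', Category.assoc, hP.w]
  -- lift u : x ⟶ Q
  have hu : (𝟙 x) ≫ g = (g ≫ e') ≫ g' := by simp [heg']
  set u := hQ.lift (𝟙 x) (g ≫ e') hu
  have hu1 := hQ.lift_fst (𝟙 x) (g ≫ e') hu
  have hu2 := hQ.lift_snd (𝟙 x) (g ≫ e') hu
  have hf : f = g ≫ e ≫ f := by
    have := congrArg (u ≫ ·) hcounit
    simp only [u, ← Category.assoc, hu1, hu2] at this
    simpa [hef, Category.assoc] using this
  have hge : g ≫ e = 𝟙 x := by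
    apply hjm
    · simp [Category.assoc, heg]
    · simpa using hf.symm
  -- lift u' : x' ⟶ Q
  have hu' : (g' ≫ e) ≫ g = (𝟙 x') ≫ g' := by simp [heg]
  set v := hQ.lift (g' ≫ e) (𝟙 x') hu'
  have hv1 := hQ.lift_fst (g' ≫ e) (𝟙 x') hu'
  have hv2 := hQ.lift_snd (g' ≫ e) (𝟙 x') hu'
  have hf' : f' = g' ≫ e ≫ f := by
    have := congrArg (v ≫ ·) hcounit
    simp only [v, ← Category.assoc, hv1, hv2] at this
    simpa [Category.assoc] using this.symm
  have hge' : g' ≫ e' = 𝟙 x' := by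
    apply hjm'
    · simp [Category.assoc, heg']
    · simp [Category.assoc, ← hef, ← hf']
  exact ⟨⟨hge, heg⟩, ⟨hge', heg'⟩, hf'⟩
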